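/- Let k ≥ 1 and n ≥ max(k, 3) be integers and let z ∈ {1,…,k}^n. Then ( ∏_{a=1}^{k} ( n_a(z)/n )^{n_a(z)} ) · Γ(1/2)^k · Γ( n + k/2 ) / ( Γ(k/2) · ∏_{a=1}^{k} Γ( n_a(z) + 1/2 ) ) ≤ n^k. -/

import Mathlib

open Finset

/-- `n_a(z)`: number of vertices in community `a`. -/
def nCount {n k : ℕ} (z : Fin n → Fin k) (a : Fin k) : ℕ :=
  (Finset.univ.filter fun i => z i = a).card


lemma four_pow_le_sqrt (m : ℕ) (hm : 1 ≤ m) :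
    (4:ℝ)^m ≤ 2 * Real.sqrt m * (Nat.centralBinom m) := by
  induction m with
  | zero => omega
  | succ m ih =>
    rcases Nat.eq_or_lt_of_le hm with h1 | h1
    · simp [← h1, Nat.centralBinom]
      norm_num [Nat.choose]
    · have hm' : 1 ≤ m := by omega
      have ih' := ih hm'
      have hrec : ((m:ℝ) + 1) * (Nat.centralBinom (m+1)) = 2 * (2*m+1) * Nat.centralBinom m := by
        exact_mod_cast congrArg (Nat.cast : ℕ → ℝ) (Nat.succ_mul_centralBinom_succ m)
      have ha2 : Real.sqrt m ^ 2 = (m:ℝ) := Real.sq_sqrt (by positivity)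
      have hb2 : Real.sqrt ((m:ℕ)+1 : ℕ) ^ 2 = (m:ℝ) + 1 := by
        push_cast
        rw [Real.sq_sqrt (by positivity)]
      have han : 0 ≤ Real.sqrt m := Real.sqrt_nonneg _
      have hbn : 0 ≤ Real.sqrt ((m:ℕ)+1 : ℕ) := Real.sqrt_nonneg _
      have hCm : (0:ℝ) < Nat.centralBinom m := by exact_mod_cast Nat.centralBinom_pos m
      have hC1 : (0:ℝ) < Nat.centralBinom (m+1) := by exact_mod_cast Nat.centralBinom_pos (m+1)
      have key : 2 * Real.sqrt m * ((m:ℝ)+1) ≤ (2*m+1) * Real.sqrt ((m:ℕ)+1 : ℕ) := by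
        nlinarith [mul_nonneg hbn (sq_nonneg (Real.sqrt m - Real.sqrt ((m:ℕ)+1 : ℕ)))]
      have hmul : ((m:ℝ)+1) * ((4:ℝ)^(m+1)) ≤ ((m:ℝ)+1) * (2 * Real.sqrt ((m:ℕ)+1 : ℕ) * (Nat.centralBinom (m+1))) := by
        have h8 : ((m:ℝ)+1) * ((4:ℝ)^(m+1)) ≤ 8 * Real.sqrt m * Nat.centralBinom m * ((m:ℝ)+1) := by
          have : (4:ℝ)^(m+1) = 4 * 4^m := by ring
          rw [this]
          nlinarith [ih', Nat.cast_nonneg (α := ℝ) m]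
        have h9 : (8:ℝ) * Real.sqrt m * Nat.centralBinom m * ((m:ℝ)+1) ≤ 4 * Real.sqrt ((m:ℕ)+1 : ℕ) * ((2*(m:ℝ)+1) * Nat.centralBinom m) := by
          nlinarith [mul_le_mul_of_nonneg_right key (le_of_lt hCm)]
        calc ((m:ℝ)+1) * ((4:ℝ)^(m+1)) ≤ 8 * Real.sqrt m * Nat.centralBinom m * ((m:ℝ)+1) := h8
          _ ≤ 4 * Real.sqrt ((m:ℕ)+1 : ℕ) * ((2*(m:ℝ)+1) * Nat.centralBinom m) := h9
          _ = ((m:ℝ)+1) * (2 * Real.sqrt ((m:ℕ)+1 : ℕ) * (Nat.centralBinom (m+1))) := by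
              nlinarith [hrec, hbn]
      have hpos : (0:ℝ) < (m:ℝ)+1 := by positivity
      exact (mul_le_mul_iff_right₀ hpos).mp hmul

lemma sqrt_pi_le_stirling (m : ℕ) (hm : 1 ≤ m) :
    Real.sqrt Real.pi ≤ Stirling.stirlingSeq m := by
  obtain ⟨n, rfl⟩ : ∃ n, m = n + 1 := ⟨m - 1, by omega⟩
  have ht : Filter.Tendsto (Stirling.stirlingSeq ∘ Nat.succ) Filter.atTop
      (nhds (Real.sqrt Real.pi)) :=
    Stirling.tendsto_stirlingSeq_sqrt_pi.comp (Filter.tendsto_add_atTop_nat 1)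
  exact Stirling.stirlingSeq'_antitone.le_of_tendsto ht n

lemma factorial_stirling (m : ℕ) (hm : 1 ≤ m) :
    Real.sqrt Real.pi * (Real.sqrt (2*m) * ((m:ℝ) / Real.exp 1)^m) ≤ (Nat.factorial m : ℝ) := by
  have h := sqrt_pi_le_stirling m hm
  rw [Stirling.stirlingSeq] at h
  have hd : (0:ℝ) < Real.sqrt (2*m) * ((m:ℝ) / Real.exp 1)^m := by
    have hm0 : (0:ℝ) < m := by exact_mod_cast hm
    positivity
  rw [le_div_iff₀ hd] at h
  linarith [h]

lemma prod_half_eq (m : ℕ) :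
    ∏ j ∈ Finset.range m, ((j:ℝ) + 1/2) = ((Nat.factorial (2*m)) : ℝ) / (4^m * (Nat.factorial m : ℝ)) := by
  induction m with
  | zero => simp
  | succ m ih =>
    rw [Finset.prod_range_succ, ih]
    have h2 : 2*(m+1) = (2*m+1)+1 := by ring
    rw [h2, Nat.factorial_succ, Nat.factorial_succ, Nat.factorial_succ]
    push_cast
    have hf : (0:ℝ) < (Nat.factorial m : ℝ) := by exact_mod_cast Nat.factorial_pos m
    field_simp
    ring

lemma pow_le_exp_prodA (m : ℕ) :
    (m:ℝ)^m ≤ Real.exp 1 ^ m * ∏ j ∈ Finset.range m, ((j:ℝ) + 1/2) := by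
  rcases Nat.eq_zero_or_pos m with h0 | hm
  · simp [h0]
  rw [prod_half_eq]
  have hm0 : (0:ℝ) < m := by exact_mod_cast hm
  have hf : (0:ℝ) < (Nat.factorial m : ℝ) := by exact_mod_cast Nat.factorial_pos m
  have hf2 : (0:ℝ) < (Nat.factorial (2*m) : ℝ) := by exact_mod_cast Nat.factorial_pos (2*m)
  have he : (0:ℝ) < Real.exp 1 := Real.exp_pos 1
  rw [mul_div_assoc', le_div_iff₀ (by positivity)]
  have h2m : ((Nat.factorial (2*m)) : ℝ)
      = (Nat.centralBinom m : ℝ) * (Nat.factorial m) * (Nat.factorial m) := by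
    have h := Nat.choose_mul_factorial_mul_factorial (show m ≤ 2*m by omega)
    have h' : 2*m - m = m := by omega
    rw [h'] at h
    rw [Nat.centralBinom]
    exact_mod_cast h.symm
  have h1 := four_pow_le_sqrt m hm
  have h2 := factorial_stirling m hm
  set A := Real.sqrt m with hAdef
  have hA : 0 < A := Real.sqrt_pos.mpr hm0
  have hs2 : Real.sqrt (2*(m:ℝ)) = Real.sqrt 2 * A := Real.sqrt_mul (by norm_num) _
  have hme : ((m:ℝ)/Real.exp 1)^m * Real.exp 1 ^ m = (m:ℝ)^m := by
    rw [div_pow]; field_simp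
  have hCb : (0:ℝ) < Nat.centralBinom m := by exact_mod_cast Nat.centralBinom_pos m
  have hsq : (2:ℝ) ≤ Real.sqrt 2 * Real.sqrt Real.pi := by
    rw [← Real.sqrt_mul (by norm_num)]
    have h4 : (4:ℝ) ≤ 2*Real.pi := by nlinarith [Real.pi_gt_three]
    calc (2:ℝ) = Real.sqrt 4 := by
          rw [show (4:ℝ) = 2^2 by norm_num, Real.sqrt_sq (by norm_num)]
      _ ≤ Real.sqrt (2*Real.pi) := Real.sqrt_le_sqrt h4
  calc (m:ℝ)^m * (4^m * (Nat.factorial m))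
      = (4:ℝ)^m * ((m:ℝ)^m * Nat.factorial m) := by ring
    _ ≤ (2*A*(Nat.centralBinom m)) * ((m:ℝ)^m * Nat.factorial m) :=
        mul_le_mul_of_nonneg_right h1 (by positivity)
    _ ≤ (Real.sqrt 2 * Real.sqrt Real.pi * A * (Nat.centralBinom m)) * ((m:ℝ)^m * Nat.factorial m) := by
        have hkey : (2:ℝ)*A*(Nat.centralBinom m)
            ≤ Real.sqrt 2 * Real.sqrt Real.pi * A * Nat.centralBinom m := by
          have := mul_nonneg (mul_nonneg (sub_nonneg.mpr hsq) hA.le) hCb.le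
          nlinarith [this]
        exact mul_le_mul_of_nonneg_right hkey (by positivity)
    _ = ((Nat.centralBinom m : ℝ) * Real.exp 1 ^ m * Nat.factorial m)
          * (Real.sqrt Real.pi * (Real.sqrt (2*(m:ℝ)) * ((m:ℝ)/Real.exp 1)^m)) := by
        rw [hs2, ← hme]; ring
    _ ≤ ((Nat.centralBinom m : ℝ) * Real.exp 1 ^ m * Nat.factorial m) * (Nat.factorial m) := by
        refine mul_le_mul_of_nonneg_left ?_ (by positivity)
        exact_mod_cast h2
    _ = Real.exp 1 ^ m * (Nat.factorial (2*m)) := by rw [h2m]; ring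

lemma expE1 (n : ℕ) : Real.exp 1 * (n:ℝ)^(n+1) ≤ ((n:ℝ)+1)^(n+1) := by
  have hpos : (0:ℝ) < (n:ℝ)+1 := by positivity
  have h : (n:ℝ)/((n:ℝ)+1) ≤ Real.exp (-(1/((n:ℝ)+1))) := by
    have h1 := Real.add_one_le_exp (-(1/((n:ℝ)+1)))
    have heq : -(1/((n:ℝ)+1)) + 1 = (n:ℝ)/((n:ℝ)+1) := by field_simp; ring
    linarith [heq ▸ h1]
  have h2 : ((n:ℝ)/((n:ℝ)+1))^(n+1) ≤ Real.exp (-(1/((n:ℝ)+1)))^(n+1) :=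
    pow_le_pow_left₀ (by positivity) h (n+1)
  have h3 : Real.exp (-(1/((n:ℝ)+1)))^(n+1) = Real.exp (-1) := by
    rw [← Real.exp_nat_mul]
    congr 1
    field_simp
    simp
  rw [h3, Real.exp_neg, div_pow, div_le_iff₀ (by positivity)] at h2
  calc Real.exp 1 * (n:ℝ)^(n+1)
      ≤ Real.exp 1 * ((Real.exp 1)⁻¹ * ((n:ℝ)+1)^(n+1)) := by
        apply mul_le_mul_of_nonneg_left _ (Real.exp_pos 1).le
        linarith [h2]
    _ = ((n:ℝ)+1)^(n+1) := by field_simp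

lemma baseC1 (n : ℕ) (hn : 3 ≤ n) :
    Real.exp 1 ^ n * ∏ j ∈ Finset.range n, ((j:ℝ) + 1/2) ≤ (n:ℝ)^(n+1) := by
  induction n, hn using Nat.le_induction with
  | base =>
    have hE := Real.exp_one_lt_d9
    have hE0 := (Real.exp_pos 1).le
    have h3 : Real.exp 1 ^ 3 ≤ 2.7182818286^3 := pow_le_pow_left₀ hE0 hE.le 3
    have hexp : Real.exp 1 ^ 3 ≤ 20.1 := by nlinarith [h3]
    simp only [Finset.prod_range_succ, Finset.prod_range_zero, one_mul]
    push_cast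
    nlinarith [hexp, pow_nonneg hE0 3]
  | succ n hn ih =>
    have hn0 : (0:ℝ) ≤ n := Nat.cast_nonneg n
    have h1 : Real.exp 1 ^ (n+1) * ∏ j ∈ Finset.range (n+1), ((j:ℝ) + 1/2)
        = (Real.exp 1 ^ n * ∏ j ∈ Finset.range n, ((j:ℝ) + 1/2)) * (Real.exp 1 * ((n:ℝ)+1/2)) := by
      rw [Finset.prod_range_succ, pow_succ]; ring
    rw [h1]
    have h2 : (Real.exp 1 ^ n * ∏ j ∈ Finset.range n, ((j:ℝ) + 1/2)) * (Real.exp 1 * ((n:ℝ)+1/2))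
        ≤ (n:ℝ)^(n+1) * (Real.exp 1 * ((n:ℝ)+1/2)) := by
      apply mul_le_mul_of_nonneg_right ih
      positivity
    refine h2.trans ?_
    have h4 : (n:ℝ)^(n+1) * (Real.exp 1 * ((n:ℝ)+1/2))
        = (Real.exp 1 * (n:ℝ)^(n+1)) * ((n:ℝ)+1/2) := by ring
    rw [h4]
    have h5 : (Real.exp 1 * (n:ℝ)^(n+1)) * ((n:ℝ)+1/2) ≤ ((n:ℝ)+1)^(n+1) * ((n:ℝ)+1) := by
      apply mul_le_mul (expE1 n) (by linarith) (by positivity)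
      positivity
    have h6 : (((n:ℕ):ℝ)+1)^(n+1) * (((n:ℕ):ℝ)+1) = (((n+1:ℕ)):ℝ)^(n+1+1) := by
      push_cast; ring
    rw [h6] at h5
    exact h5

lemma baseC2 (n : ℕ) (hn : 3 ≤ n) :
    Real.exp 1 ^ n * ∏ j ∈ Finset.range n, ((j:ℝ) + 1) ≤ (n:ℝ)^(n+2) := by
  induction n, hn using Nat.le_induction with
  | base =>
    have hE := Real.exp_one_lt_d9
    have hE0 := (Real.exp_pos 1).le
    have h3 : Real.exp 1 ^ 3 ≤ 2.7182818286^3 := pow_le_pow_left₀ hE0 hE.le 3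
    have hexp : Real.exp 1 ^ 3 ≤ 20.1 := by nlinarith [h3]
    simp only [Finset.prod_range_succ, Finset.prod_range_zero, one_mul]
    push_cast
    nlinarith [hexp, pow_nonneg hE0 3]
  | succ n hn ih =>
    have hn0 : (0:ℝ) ≤ n := Nat.cast_nonneg n
    have h1 : Real.exp 1 ^ (n+1) * ∏ j ∈ Finset.range (n+1), ((j:ℝ) + 1)
        = (Real.exp 1 ^ n * ∏ j ∈ Finset.range n, ((j:ℝ) + 1)) * (Real.exp 1 * ((n:ℝ)+1)) := by
      rw [Finset.prod_range_succ, pow_succ]; ring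
    rw [h1]
    have h2 : (Real.exp 1 ^ n * ∏ j ∈ Finset.range n, ((j:ℝ) + 1)) * (Real.exp 1 * ((n:ℝ)+1))
        ≤ (n:ℝ)^(n+2) * (Real.exp 1 * ((n:ℝ)+1)) := by
      apply mul_le_mul_of_nonneg_right ih
      positivity
    refine h2.trans ?_
    have h5 : (n:ℝ)^(n+2) * (Real.exp 1 * ((n:ℝ)+1)) ≤ (((n:ℝ)+1)^(n+2)) * ((n:ℝ)+1) := by
      have hE1 : Real.exp 1 * (n:ℝ)^(n+2) ≤ ((n:ℝ)+1)^(n+2) := by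
        have := mul_le_mul_of_nonneg_right (expE1 n) hn0
        calc Real.exp 1 * (n:ℝ)^(n+2) = (Real.exp 1 * (n:ℝ)^(n+1)) * n := by ring
          _ ≤ ((n:ℝ)+1)^(n+1) * n := this
          _ ≤ ((n:ℝ)+1)^(n+1) * ((n:ℝ)+1) := by
              apply mul_le_mul_of_nonneg_left (by linarith) (by positivity)
          _ = ((n:ℝ)+1)^(n+2) := by ring
      nlinarith [hE1, hn0]
    refine h5.trans ?_
    have h6 : (((n:ℕ):ℝ)+1)^(n+2) * (((n:ℕ):ℝ)+1) = (((n+1:ℕ)):ℝ)^(n+1+2) := by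
      push_cast; ring
    rw [h6]

lemma prod_shift (c : ℝ) (n : ℕ) :
    (∏ j ∈ Finset.range n, ((j:ℝ) + 1 + c)) * c
      = (∏ j ∈ Finset.range n, ((j:ℝ) + c)) * ((n:ℝ) + c) := by
  induction n with
  | zero => simp
  | succ n ih =>
    rw [Finset.prod_range_succ, Finset.prod_range_succ]
    push_cast
    linear_combination ((n:ℝ) + 1 + c) * ih

lemma lemC : ∀ k : ℕ, 1 ≤ k → ∀ n : ℕ, 3 ≤ n →
    Real.exp 1 ^ n * ∏ j ∈ Finset.range n, ((j:ℝ) + (k:ℝ)/2) ≤ (n:ℝ)^(n+k) := by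
  intro k
  induction k using Nat.strong_induction_on with
  | _ k ih =>
    intro hk n hn
    match k, hk with
    | 1, _ =>
      have h := baseC1 n hn
      have he : ∏ j ∈ Finset.range n, ((j:ℝ) + ((1:ℕ):ℝ)/2)
          = ∏ j ∈ Finset.range n, ((j:ℝ) + 1/2) := by norm_num
      rw [he]; exact h
    | 2, _ =>
      have h := baseC2 n hn
      have he : ∏ j ∈ Finset.range n, ((j:ℝ) + ((2:ℕ):ℝ)/2)
          = ∏ j ∈ Finset.range n, ((j:ℝ) + 1) := by norm_num
      rw [he]; exact h
    | (k+3), _ =>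
      have ihk := ih (k+1) (by omega) (by omega) n hn
      set c : ℝ := ((k:ℝ)+1)/2 with hc
      have hck : (0:ℝ) ≤ (k:ℝ) := Nat.cast_nonneg k
      have hc0 : (0:ℝ) < c := by rw [hc]; linarith
      have hc1 : (1:ℝ)/2 ≤ c := by rw [hc]; linarith
      have hn0 : (3:ℝ) ≤ (n:ℝ) := by exact_mod_cast hn
      have hterm : ∀ j : ℕ, (j:ℝ) + ((k+3 : ℕ):ℝ)/2 = (j:ℝ) + 1 + c := by
        intro j; rw [hc]; push_cast; ring
      have hpc : ∏ j ∈ Finset.range n, ((j:ℝ) + ((k+3 : ℕ):ℝ)/2)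
          = ∏ j ∈ Finset.range n, ((j:ℝ) + 1 + c) :=
        Finset.prod_congr rfl (fun j _ => hterm j)
      rw [hpc, ← mul_le_mul_iff_left₀ hc0]
      have e1 : Real.exp 1 ^ n * (∏ j ∈ Finset.range n, ((j:ℝ) + 1 + c)) * c
          = (Real.exp 1 ^ n * ∏ j ∈ Finset.range n, ((j:ℝ) + c)) * ((n:ℝ) + c) := by
        rw [mul_assoc, prod_shift c n]; ring
      rw [e1]
      have eP : Real.exp 1 ^ n * ∏ j ∈ Finset.range n, ((j:ℝ) + c) ≤ (n:ℝ)^(n+(k+1)) := by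
        have hq : ∏ j ∈ Finset.range n, ((j:ℝ) + c)
            = ∏ j ∈ Finset.range n, ((j:ℝ) + ((k+1 : ℕ):ℝ)/2) :=
          Finset.prod_congr rfl (fun j _ => by rw [hc]; push_cast; ring)
        rw [hq]; exact ihk
      have hnc : (0:ℝ) ≤ (n:ℝ) + c := by linarith
      have hfin : (n:ℝ) + c ≤ (n:ℝ)^2 * c := by
        nlinarith [mul_nonneg (by linarith : (0:ℝ) ≤ c - 1/2)
          (by nlinarith : (0:ℝ) ≤ (n:ℝ)^2 - 1), sq_nonneg ((n:ℝ) - 3)]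
      have hq2 : (0:ℝ) ≤ (n:ℝ)^(n+(k+1)) := by positivity
      calc (Real.exp 1 ^ n * ∏ j ∈ Finset.range n, ((j:ℝ) + c)) * ((n:ℝ) + c)
          ≤ (n:ℝ)^(n+(k+1)) * ((n:ℝ) + c) := mul_le_mul_of_nonneg_right eP hnc
        _ ≤ (n:ℝ)^(n+(k+1)) * ((n:ℝ)^2 * c) := mul_le_mul_of_nonneg_left hfin hq2
        _ = (n:ℝ)^(n+(k+3)) * c := by
            have hee : n+(k+3) = (n+(k+1))+2 := by omega
            rw [hee, pow_add]; ring

lemma gamma_prodX (x : ℝ) (hx : 0 < x) (m : ℕ) :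
    Real.Gamma (x + m) = Real.Gamma x * ∏ j ∈ Finset.range m, (x + j) := by
  induction m with
  | zero => simp
  | succ m ih =>
    have h1 : x + ((m : ℕ) + 1 : ℕ) = (x + m) + 1 := by push_cast; ring
    have h2 : x + (m : ℝ) ≠ 0 := by positivity
    rw [h1, Real.Gamma_add_one h2, ih, Finset.prod_range_succ]
    ring

lemma sum_nCount {n k : ℕ} (z : Fin n → Fin k) : ∑ a : Fin k, nCount z a = n := by
  classical
  have h := Finset.card_eq_sum_card_fiberwise
    (f := z) (s := Finset.univ) (t := Finset.univ) (fun x _ => Finset.mem_univ _)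
  simp only [Finset.card_univ, Fintype.card_fin] at h
  simp [nCount, ← h]

/-- bound on the ratio `Ĉ(z)/C(z)`. -/
theorem ratio_C_bound (k n : ℕ) (hk : 1 ≤ k) (hn : max k 3 ≤ n)
    (z : Fin n → Fin k) :
    (∏ a : Fin k, ((nCount z a : ℝ) / (n : ℝ)) ^ (nCount z a)) *
        Real.Gamma (1 / 2) ^ k * Real.Gamma ((n : ℝ) + (k : ℝ) / 2) /
        (Real.Gamma ((k : ℝ) / 2) *
          ∏ a : Fin k, Real.Gamma ((nCount z a : ℝ) + 1 / 2)) ≤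
      (n : ℝ) ^ k := by
  have hn3 : 3 ≤ n := le_trans (le_max_right k 3) hn
  have hn0 : (0:ℝ) < (n:ℝ) := by exact_mod_cast (by omega : 0 < n)
  have hk0 : (0:ℝ) < (k:ℝ)/2 := by
    have : (0:ℝ) < (k:ℝ) := by exact_mod_cast hk
    linarith
  have hsum : ∑ a : Fin k, nCount z a = n := sum_nCount z
  set Q := ∏ j ∈ Finset.range n, ((j:ℝ) + (k:ℝ)/2) with hQdef
  set R := ∏ a : Fin k, ∏ j ∈ Finset.range (nCount z a), ((j:ℝ) + 1/2) with hRdef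
  have hQ0 : 0 ≤ Q := by
    rw [hQdef]; apply Finset.prod_nonneg; intro j _; positivity
  have hR0 : 0 ≤ R := by
    rw [hRdef]; apply Finset.prod_nonneg; intro a _
    apply Finset.prod_nonneg; intro j _; positivity
  have hG1 : Real.Gamma ((n:ℝ) + (k:ℝ)/2) = Real.Gamma ((k:ℝ)/2) * Q := by
    rw [add_comm, gamma_prodX _ hk0 n, hQdef]
    congr 1
    exact Finset.prod_congr rfl (fun j _ => add_comm _ _)
  have hG2 : ∀ a : Fin k, Real.Gamma ((nCount z a : ℝ) + 1/2)
      = Real.Gamma (1/2) * ∏ j ∈ Finset.range (nCount z a), ((j:ℝ) + 1/2) := by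
    intro a
    rw [add_comm, gamma_prodX _ (by norm_num : (0:ℝ) < 1/2) _]
    congr 1
    exact Finset.prod_congr rfl (fun j _ => add_comm _ _)
  have hprodG : ∏ a : Fin k, Real.Gamma ((nCount z a : ℝ) + 1/2)
      = Real.Gamma (1/2) ^ k * R := by
    rw [Finset.prod_congr rfl (fun a _ => hG2 a), Finset.prod_mul_distrib, hRdef]
    congr 1
    simp
  have hGk : 0 < Real.Gamma ((k:ℝ)/2) := Real.Gamma_pos_of_pos hk0
  have hGh : 0 < Real.Gamma (1/2 : ℝ) := Real.Gamma_pos_of_pos (by norm_num)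
  -- key inequality
  have key : (∏ a : Fin k, ((nCount z a : ℝ)/(n:ℝ))^(nCount z a)) * Q ≤ (n:ℝ)^k * R := by
    have hA : ∏ a : Fin k, ((nCount z a : ℝ)/(n:ℝ))^(nCount z a)
        = (∏ a : Fin k, (nCount z a : ℝ)^(nCount z a)) / (n:ℝ)^n := by
      simp_rw [div_pow]
      rw [Finset.prod_div_distrib, Finset.prod_pow_eq_pow_sum, hsum]
    rw [hA, div_mul_eq_mul_div, div_le_iff₀ (by positivity)]
    have hstep1 : ∏ a : Fin k, (nCount z a : ℝ)^(nCount z a) ≤ Real.exp 1 ^ n * R := by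
      calc ∏ a : Fin k, (nCount z a : ℝ)^(nCount z a)
          ≤ ∏ a : Fin k, (Real.exp 1 ^ (nCount z a)
              * ∏ j ∈ Finset.range (nCount z a), ((j:ℝ) + 1/2)) :=
            Finset.prod_le_prod (fun a _ => by positivity)
              (fun a _ => pow_le_exp_prodA (nCount z a))
        _ = Real.exp 1 ^ n * R := by
            rw [Finset.prod_mul_distrib, Finset.prod_pow_eq_pow_sum, hsum, hRdef]
    have hstep2 : Real.exp 1 ^ n * Q ≤ (n:ℝ)^(n+k) := lemC k hk n hn3
    calc (∏ a : Fin k, (nCount z a : ℝ)^(nCount z a)) * Q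
        ≤ (Real.exp 1 ^ n * R) * Q := mul_le_mul_of_nonneg_right hstep1 hQ0
      _ = (Real.exp 1 ^ n * Q) * R := by ring
      _ ≤ (n:ℝ)^(n+k) * R := mul_le_mul_of_nonneg_right hstep2 hR0
      _ = (n:ℝ)^k * R * (n:ℝ)^n := by rw [pow_add]; ring
  rw [hG1, hprodG, div_le_iff₀ (by positivity)]
  calc (∏ a : Fin k, ((nCount z a : ℝ)/(n:ℝ))^(nCount z a)) * Real.Gamma (1/2) ^ k
        * (Real.Gamma ((k:ℝ)/2) * Q)
      = ((∏ a : Fin k, ((nCount z a : ℝ)/(n:ℝ))^(nCount z a)) * Q)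
          * (Real.Gamma (1/2) ^ k * Real.Gamma ((k:ℝ)/2)) := by ring
    _ ≤ ((n:ℝ)^k * R) * (Real.Gamma (1/2) ^ k * Real.Gamma ((k:ℝ)/2)) := by
        apply mul_le_mul_of_nonneg_right key
        positivity
    _ = (n:ℝ)^k * (Real.Gamma ((k:ℝ)/2) * (Real.Gamma (1/2) ^ k * R)) := by ring
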